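/- Let ξ be a row exchangeable array with row distributions (μ_i). Fix M ∈ ℕ, and for each i ≤ M fix N_i < O_i and Borel sets A_{ij} ⊆ S for N_i < j ≤ O_i. Let 𝒢 be any sub-σ-algebra of the σ-algebra generated by the observed entries {ξ_{ij} : i ≤ M, j ≤ N_i}. Then P(⋂_{i=1}^M ⋂_{j=N_i+1}^{O_i} {ξ_{ij} ∈ A_{ij}} | 𝒢) = E[∏_{i=1}^M ∏_{j=N_i+1}^{O_i} μ_i(A_{ij}) | 𝒢] almost surely. -/

import Mathlib

open MeasureTheory ProbabilityTheory TopologicalSpace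

noncomputable section

/-- A finite permutation of `ℕ`. -/
def FinitePerm (σ : Equiv.Perm ℕ) : Prop := {n | σ n ≠ n}.Finite

/-- The array `ξ` is row exchangeable. -/
def RowExchangeable {Ω S : Type*} [MeasurableSpace Ω] [MeasurableSpace S]
    (P : Measure Ω) (ξ : ℕ → ℕ → Ω → S) : Prop :=
  (∀ (i : ℕ) (τ : Equiv.Perm ℕ), FinitePerm τ →
    Measure.map (fun ω (j : ℕ) => ξ i (τ j) ω) P = Measure.map (fun ω (j : ℕ) => ξ i j ω) P) ∧
  (∀ σ : Equiv.Perm ℕ, FinitePerm σ →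
    Measure.map (fun ω (i j : ℕ) => ξ (σ i) j ω) P
      = Measure.map (fun ω (i j : ℕ) => ξ i j ω) P)


lemma stmt18_key {Ω S : Type*} [MeasurableSpace Ω]
    [MetricSpace S] [CompleteSpace S] [SeparableSpace S] [MeasurableSpace S] [BorelSpace S]
    (P : Measure Ω) [IsProbabilityMeasure P]
    (ξ : ℕ → ℕ → Ω → S) (hξ : ∀ i j, Measurable (ξ i j))
    (μ : ℕ → Ω → Measure S) (hμm : ∀ i, Measurable (μ i))
    (hμp : ∀ i ω, IsProbabilityMeasure (μ i ω))
    (hcond : ∀ (m n : ℕ) (A : Fin m → Fin n → Set S), (∀ i j, MeasurableSet (A i j)) →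
      P[Set.indicator {ω | ∀ (i : Fin m) (j : Fin n), ξ (i : ℕ) (j : ℕ) ω ∈ A i j}
          (fun _ => (1:ℝ)) |
          MeasurableSpace.comap (fun ω (i : Fin m) => μ (i : ℕ) ω) inferInstance]
        =ᵐ[P] fun ω => ∏ i : Fin m, ∏ j : Fin n, ((μ (i : ℕ) ω) (A i j)).toReal)
    (M : ℕ) (N O : Fin M → ℕ) (hNO : ∀ i, N i < O i)
    (A : Fin M → ℕ → Set S) (hA : ∀ (i : Fin M), ∀ j ∈ Finset.Ico (N i) (O i), MeasurableSet (A i j)) :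
    ∀ s : Set Ω, MeasurableSet[MeasurableSpace.comap
      (fun ω => fun (i : Fin M) (j : Fin (N i)) => ξ (i : ℕ) (j : ℕ) ω) inferInstance] s →
      ∫ ω in s, Set.indicator {ω | ∀ i : Fin M, ∀ j ∈ Finset.Ico (N i) (O i),
          ξ (i : ℕ) j ω ∈ A i j} (fun _ => (1:ℝ)) ω ∂P
        = ∫ ω in s, (∏ i : Fin M, ∏ j ∈ Finset.Ico (N i) (O i),
            ((μ (i : ℕ) ω) (A i j)).toReal) ∂P := by
  classical
  -- identification of the data σ-algebra as a sup over coordinates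
  set Sset : Set (ℕ × ℕ) := {p | ∃ h : p.1 < M, p.2 < N ⟨p.1, h⟩} with hSset
  have hiSup : MeasurableSpace.comap
        (fun ω => fun (i : Fin M) (j : Fin (N i)) => ξ (i : ℕ) (j : ℕ) ω) inferInstance
      = ⨆ p ∈ Sset, MeasurableSpace.comap (ξ p.1 p.2) inferInstance := by
    have e1 : (inferInstance : MeasurableSpace (∀ i : Fin M, Fin (N i) → S))
        = ⨆ i : Fin M, MeasurableSpace.comap (fun x => x i) inferInstance := rfl
    rw [e1, MeasurableSpace.comap_iSup]
    have e3 : (⨆ i : Fin M, (MeasurableSpace.comap (fun x => x i)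
          (inferInstance : MeasurableSpace (Fin (N i) → S))).comap
          (fun ω => fun (i : Fin M) (j : Fin (N i)) => ξ (i : ℕ) (j : ℕ) ω))
        = ⨆ i : Fin M, ⨆ j : Fin (N i),
            MeasurableSpace.comap (ξ (i : ℕ) (j : ℕ)) inferInstance := by
      refine iSup_congr fun i => ?_
      rw [MeasurableSpace.comap_comp]
      have e2 : (inferInstance : MeasurableSpace (Fin (N i) → S))
          = ⨆ j : Fin (N i), MeasurableSpace.comap (fun y => y j) inferInstance := rfl
      rw [e2, MeasurableSpace.comap_iSup]
      refine iSup_congr fun j => ?_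
      rw [MeasurableSpace.comap_comp]
      rfl
    rw [e3]
    apply le_antisymm
    · refine iSup_le fun i => iSup_le fun j => ?_
      exact le_iSup₂ (f := fun (p : ℕ × ℕ) (_ : p ∈ Sset) =>
        MeasurableSpace.comap (ξ p.1 p.2) inferInstance) ((i : ℕ), (j : ℕ)) ⟨i.2, j.2⟩
    · refine iSup₂_le fun p hp => ?_
      obtain ⟨h1, h2⟩ := hp
      exact le_iSup_of_le ⟨p.1, h1⟩ (le_iSup_of_le ⟨p.2, h2⟩ le_rfl)
  have hgen : MeasurableSpace.comap
        (fun ω => fun (i : Fin M) (j : Fin (N i)) => ξ (i : ℕ) (j : ℕ) ω) inferInstance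
      = MeasurableSpace.generateFrom (piiUnionInter
          (fun p : ℕ × ℕ => {s | MeasurableSet[MeasurableSpace.comap (ξ p.1 p.2)
            inferInstance] s}) Sset) := by
    rw [hiSup]
    exact (generateFrom_piiUnionInter_measurableSet
      (fun p : ℕ × ℕ => MeasurableSpace.comap (ξ p.1 p.2) inferInstance) Sset).symm
  set E : Set Ω := {ω | ∀ i : Fin M, ∀ j ∈ Finset.Ico (N i) (O i), ξ (i : ℕ) j ω ∈ A i j} with hE
  set indE : Ω → ℝ := Set.indicator E (fun _ => (1:ℝ)) with hindE
  set f : Ω → ℝ := fun ω => ∏ i : Fin M, ∏ j ∈ Finset.Ico (N i) (O i),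
    ((μ (i : ℕ) ω) (A i j)).toReal with hf
  set n₀ : ℕ := Finset.univ.sup O with hn₀
  have hOn : ∀ i, O i ≤ n₀ := fun i => Finset.le_sup (Finset.mem_univ i)
  have hDle : MeasurableSpace.comap
      (fun ω => fun (i : Fin M) (j : Fin (N i)) => ξ (i : ℕ) (j : ℕ) ω) inferInstance
      ≤ (inferInstance : MeasurableSpace Ω) := by
    refine Measurable.comap_le ?_
    exact measurable_pi_lambda _ fun i => measurable_pi_lambda _ fun j => hξ _ _
  have hmμle : MeasurableSpace.comap (fun ω (i : Fin M) => μ (i : ℕ) ω) inferInstance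
      ≤ (inferInstance : MeasurableSpace Ω) :=
    Measurable.comap_le (measurable_pi_lambda _ fun i => hμm _)
  haveI : SigmaFinite (P.trim hmμle) := inferInstance
  have hEmeas : MeasurableSet E := by
    have h : E = ⋂ i : Fin M, ⋂ j ∈ Finset.Ico (N i) (O i), ξ (i : ℕ) j ⁻¹' A i j := by
      ext ω; simp [hE, Set.mem_iInter]
    rw [h]
    exact MeasurableSet.iInter fun i => MeasurableSet.iInter fun j =>
      MeasurableSet.iInter fun hj => (hξ _ _) (hA i j hj)
  have hindEint : Integrable indE P := (integrable_const (1:ℝ)).indicator hEmeas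
  have hf01 : ∀ ω, 0 ≤ f ω ∧ f ω ≤ 1 := by
    intro ω
    constructor
    · exact Finset.prod_nonneg fun i _ => Finset.prod_nonneg fun j _ => ENNReal.toReal_nonneg
    · refine Finset.prod_le_one (fun i _ => Finset.prod_nonneg fun j _ => ENNReal.toReal_nonneg)
        (fun i _ => Finset.prod_le_one (fun j _ => ENNReal.toReal_nonneg) fun j _ => ?_)
      have h1 : μ (i : ℕ) ω (A i j) ≤ 1 := prob_le_one
      simpa using ENNReal.toReal_mono ENNReal.one_ne_top h1
  have hfmeas : Measurable f := by
    refine Finset.measurable_prod _ fun i _ => Finset.measurable_prod _ fun j hj => ?_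
    exact ((Measure.measurable_coe (hA i j hj)).comp (hμm i)).ennreal_toReal
  have hfint : Integrable f P := by
    refine (integrable_const (1:ℝ)).mono' hfmeas.aestronglyMeasurable ?_
    exact Filter.Eventually.of_forall fun ω => by
      rw [Real.norm_eq_abs, abs_of_nonneg (hf01 ω).1]; exact (hf01 ω).2
  have hbasic : ∀ t ∈ piiUnionInter
      (fun p : ℕ × ℕ => {s | MeasurableSet[MeasurableSpace.comap (ξ p.1 p.2)
        inferInstance] s}) Sset,
      ∫ ω in t, indE ω ∂P = ∫ ω in t, f ω ∂P := by
    rintro t ⟨T, hTS, g, hgmem, rfl⟩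
    have hgm : ∀ p ∈ T, ∃ B : Set S, MeasurableSet B ∧ ξ p.1 p.2 ⁻¹' B = g p :=
      fun p hp => MeasurableSpace.measurableSet_comap.mp (hgmem p hp)
    set B : ℕ × ℕ → Set S := fun p => if hp : p ∈ T then (hgm p hp).choose else Set.univ
      with hBdef
    have hB : ∀ p (hp : p ∈ T), MeasurableSet (B p) ∧ ξ p.1 p.2 ⁻¹' (B p) = g p := by
      intro p hp; rw [hBdef]; simp only [dif_pos hp]; exact (hgm p hp).choose_spec
    have hBuniv : ∀ p, p ∉ T → B p = Set.univ := by
      intro p hp; rw [hBdef]; simp [hp]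
    have hBmeas : ∀ p, MeasurableSet (B p) := by
      intro p; by_cases hp : p ∈ T
      · exact (hB p hp).1
      · rw [hBuniv p hp]; exact MeasurableSet.univ
    have hTS' : ∀ p ∈ T, ∃ h : p.1 < M, p.2 < N ⟨p.1, h⟩ := fun p hp => hTS hp
    have hBIco : ∀ (i : Fin M) (j : ℕ), N i ≤ j → B ((i : ℕ), j) = Set.univ := by
      intro i j hj
      refine hBuniv _ fun hp => ?_
      obtain ⟨h1, h2⟩ := hTS' _ hp
      have he : (⟨(i : ℕ), h1⟩ : Fin M) = i := rfl
      rw [he] at h2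
      omega
    have hTsub : T ⊆ Finset.range M ×ˢ Finset.range n₀ := by
      intro p hp
      obtain ⟨h1, h2⟩ := hTS' p hp
      simp only [Finset.mem_product, Finset.mem_range]
      exact ⟨h1, lt_of_lt_of_le (h2.trans (hNO ⟨p.1, h1⟩)) (hOn ⟨p.1, h1⟩)⟩
    set A2 : Fin M → Fin n₀ → Set S := fun i j =>
      if (j : ℕ) ∈ Finset.Ico (N i) (O i) then A i (j : ℕ) else B ((i : ℕ), (j : ℕ))
      with hA2def
    have hA2 : ∀ i j, MeasurableSet (A2 i j) := by
      intro i j; rw [hA2def]; dsimp only; split_ifs with h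
      · exact hA i _ h
      · exact hBmeas _
    set A3 : Fin M → Fin n₀ → Set S := fun i j => B ((i : ℕ), (j : ℕ)) with hA3def
    have hA3 : ∀ i j, MeasurableSet (A3 i j) := fun i j => hBmeas _
    have hgT : ∀ p ∈ T, g p = ξ p.1 p.2 ⁻¹' (B p) := fun p hp => ((hB p hp).2).symm
    have hsm : MeasurableSet (⋂ p ∈ T, g p) := by
      refine Set.Finite.measurableSet_biInter T.finite_toSet fun p hp => ?_
      rw [hgT p hp]; exact (hξ p.1 p.2) (hBmeas p)
    have hEv2 : {ω | ∀ (i : Fin M) (j : Fin n₀), ξ (i : ℕ) (j : ℕ) ω ∈ A3 i j}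
        = ⋂ p ∈ T, g p := by
      ext ω
      simp only [Set.mem_setOf_eq, Set.mem_iInter]
      constructor
      · intro h p hp
        obtain ⟨h1, h2⟩ := hTS' p hp
        rw [hgT p hp]
        have h3 : p.2 < n₀ := lt_of_lt_of_le (h2.trans (hNO ⟨p.1, h1⟩)) (hOn ⟨p.1, h1⟩)
        exact h ⟨p.1, h1⟩ ⟨p.2, h3⟩
      · intro h i j
        rw [hA3def]; dsimp only
        by_cases hp : ((i : ℕ), (j : ℕ)) ∈ T
        · have h4 := h _ hp; rw [hgT _ hp] at h4; exact h4
        · rw [hBuniv _ hp]; trivial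
    have hEv1 : {ω | ∀ (i : Fin M) (j : Fin n₀), ξ (i : ℕ) (j : ℕ) ω ∈ A2 i j}
        = E ∩ ⋂ p ∈ T, g p := by
      ext ω
      simp only [Set.mem_setOf_eq, Set.mem_inter_iff, Set.mem_iInter, hE]
      constructor
      · intro h
        refine ⟨fun i j hj => ?_, fun p hp => ?_⟩
        · have hjn : j < n₀ := lt_of_lt_of_le (Finset.mem_Ico.mp hj).2 (hOn i)
          have h5 := h i ⟨j, hjn⟩
          rw [hA2def] at h5; dsimp only at h5
          rwa [if_pos (by simpa using hj)] at h5
        · obtain ⟨h1, h2⟩ := hTS' p hp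
          have h3 : p.2 < n₀ := lt_of_lt_of_le (h2.trans (hNO ⟨p.1, h1⟩)) (hOn ⟨p.1, h1⟩)
          have h5 := h ⟨p.1, h1⟩ ⟨p.2, h3⟩
          rw [hA2def] at h5; dsimp only at h5
          rw [if_neg (by simp only [Finset.mem_Ico, not_and]; omega)] at h5
          rw [hgT p hp]
          exact h5
      · rintro ⟨hEω, hT'⟩ i j
        rw [hA2def]; dsimp only
        split_ifs with hj
        · exact hEω i (j : ℕ) hj
        · by_cases hp : ((i : ℕ), (j : ℕ)) ∈ T
          · have h4 := hT' _ hp; rw [hgT _ hp] at h4; exact h4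
          · rw [hBuniv _ hp]; trivial
    have hP2 : ∀ ω, (∏ i : Fin M, ∏ j : Fin n₀, ((μ (i : ℕ) ω) (A3 i j)).toReal)
        = ∏ p ∈ T, ((μ p.1 ω) (B p)).toReal := by
      intro ω
      rw [Finset.prod_subset hTsub (fun p _ hpT => by
        haveI := hμp p.1 ω
        simp [hBuniv p hpT, measure_univ])]
      rw [Finset.prod_product]
      rw [← Fin.prod_univ_eq_prod_range
        (fun i => ∏ j ∈ Finset.range n₀, ((μ i ω) (B (i, j))).toReal) M]
      refine Finset.prod_congr rfl fun i _ => ?_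
      rw [hA3def]
      exact Fin.prod_univ_eq_prod_range (fun j => ((μ (i : ℕ) ω) (B ((i : ℕ), j))).toReal) n₀
    have hP1 : ∀ ω, (∏ i : Fin M, ∏ j : Fin n₀, ((μ (i : ℕ) ω) (A2 i j)).toReal)
        = f ω * ∏ p ∈ T, ((μ p.1 ω) (B p)).toReal := by
      intro ω
      rw [← hP2 ω, hf]; dsimp only
      rw [← Finset.prod_mul_distrib]
      refine Finset.prod_congr rfl fun i _ => ?_
      have hsplit : ∀ j : Fin n₀, ((μ (i : ℕ) ω) (A2 i j)).toReal
          = (if (j : ℕ) ∈ Finset.Ico (N i) (O i)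
              then ((μ (i : ℕ) ω) (A i (j : ℕ))).toReal else 1)
            * ((μ (i : ℕ) ω) (A3 i j)).toReal := by
        intro j
        rw [hA2def, hA3def]; dsimp only
        by_cases hj : (j : ℕ) ∈ Finset.Ico (N i) (O i)
        · rw [if_pos hj, if_pos hj, hBIco i (j : ℕ) (Finset.mem_Ico.mp hj).1]
          haveI := hμp (i : ℕ) ω
          simp [measure_univ]
        · rw [if_neg hj, if_neg hj, one_mul]
      rw [Finset.prod_congr rfl (fun j _ => hsplit j), Finset.prod_mul_distrib]
      congr 1
      have hIcoSub : Finset.Ico (N i) (O i) ⊆ Finset.range n₀ := fun j hj =>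
        Finset.mem_range.mpr (lt_of_lt_of_le (Finset.mem_Ico.mp hj).2 (hOn i))
      rw [Fin.prod_univ_eq_prod_range
        (fun j => if j ∈ Finset.Ico (N i) (O i)
          then ((μ (i : ℕ) ω) (A i j)).toReal else 1) n₀]
      rw [← Finset.prod_subset hIcoSub (fun j _ hj => if_neg hj)]
      exact Finset.prod_congr rfl fun j hj => if_pos hj
    -- now the two integral computations
    have hLHS : ∫ ω in (⋂ p ∈ T, g p), indE ω ∂P
        = ∫ ω, (∏ i : Fin M, ∏ j : Fin n₀, ((μ (i : ℕ) ω) (A2 i j)).toReal) ∂P := by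
      rw [← integral_indicator hsm]
      have h6 : Set.indicator (⋂ p ∈ T, g p) indE
          = Set.indicator ({ω | ∀ (i : Fin M) (j : Fin n₀), ξ (i : ℕ) (j : ℕ) ω ∈ A2 i j})
            (fun _ => (1:ℝ)) := by
        rw [hindE, Set.indicator_indicator, Set.inter_comm, ← hEv1]
      rw [h6]
      rw [← integral_condExp hmμle (f := Set.indicator
        {ω | ∀ (i : Fin M) (j : Fin n₀), ξ (i : ℕ) (j : ℕ) ω ∈ A2 i j} (fun _ => (1:ℝ)))]
      exact integral_congr_ae (hcond M n₀ A2 hA2)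
    have hχint : Integrable (Set.indicator (⋂ p ∈ T, g p) (fun _ => (1:ℝ))) P :=
      (integrable_const 1).indicator hsm
    have hfχ : f * Set.indicator (⋂ p ∈ T, g p) (fun _ => (1:ℝ))
        = Set.indicator (⋂ p ∈ T, g p) f := by
      funext ω
      by_cases hω : ω ∈ ⋂ p ∈ T, g p
      · simp [Set.indicator_of_mem hω]
      · simp [Set.indicator_of_notMem hω]
    have hfχint : Integrable (f * Set.indicator (⋂ p ∈ T, g p) (fun _ => (1:ℝ))) P := by
      rw [hfχ]
      exact hfint.indicator hsm
    have hfsm : StronglyMeasurable[MeasurableSpace.comap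
        (fun ω (i : Fin M) => μ (i : ℕ) ω) inferInstance] f := by
      have hg0 : Measurable[MeasurableSpace.comap
          (fun ω (i : Fin M) => μ (i : ℕ) ω) inferInstance]
          (fun ω (i : Fin M) => μ (i : ℕ) ω) := Measurable.of_comap_le le_rfl
      have hmf : Measurable[MeasurableSpace.comap
          (fun ω (i : Fin M) => μ (i : ℕ) ω) inferInstance] f := by
        rw [hf]
        refine Finset.measurable_prod _ fun i _ => Finset.measurable_prod _ fun j hj => ?_
        have houter : Measurable (fun x : Fin M → Measure S => (x i) (A i j)) :=
          (Measure.measurable_coe (hA i j hj)).comp (measurable_pi_apply i)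
        exact (houter.comp hg0).ennreal_toReal
      exact hmf.stronglyMeasurable
    have hcond3 := hcond M n₀ A3 hA3
    rw [hEv2] at hcond3
    have hRHS : ∫ ω in (⋂ p ∈ T, g p), f ω ∂P
        = ∫ ω, (∏ i : Fin M, ∏ j : Fin n₀, ((μ (i : ℕ) ω) (A2 i j)).toReal) ∂P := by
      calc ∫ ω in (⋂ p ∈ T, g p), f ω ∂P
          = ∫ ω, (f * Set.indicator (⋂ p ∈ T, g p) (fun _ => (1:ℝ))) ω ∂P := by
            rw [← integral_indicator hsm, ← hfχ]
        _ = ∫ ω, (P[f * Set.indicator (⋂ p ∈ T, g p) (fun _ => (1:ℝ)) |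
              MeasurableSpace.comap (fun ω (i : Fin M) => μ (i : ℕ) ω) inferInstance]) ω ∂P :=
            (integral_condExp hmμle).symm
        _ = ∫ ω, (f * P[Set.indicator (⋂ p ∈ T, g p) (fun _ => (1:ℝ)) |
              MeasurableSpace.comap (fun ω (i : Fin M) => μ (i : ℕ) ω) inferInstance]) ω ∂P :=
            integral_congr_ae (condExp_mul_of_stronglyMeasurable_left hfsm hfχint hχint)
        _ = ∫ ω, (∏ i : Fin M, ∏ j : Fin n₀, ((μ (i : ℕ) ω) (A2 i j)).toReal) ∂P := by
            refine integral_congr_ae (hcond3.mono fun ω hω => ?_)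
            simp only [Pi.mul_apply]
            rw [hω, hP1 ω]
            exact congrArg (fun z => f ω * z) (hP2 ω)
    exact hLHS.trans hRHS.symm
  have hunivmem : Set.univ ∈ piiUnionInter
      (fun p : ℕ × ℕ => {s | MeasurableSet[MeasurableSpace.comap (ξ p.1 p.2)
        inferInstance] s}) Sset :=
    ⟨∅, by simp, fun _ => Set.univ, fun x hx => absurd hx (Finset.notMem_empty x), by simp⟩
  have huniv : ∫ ω, indE ω ∂P = ∫ ω, f ω ∂P := by
    have h := hbasic _ hunivmem
    rwa [setIntegral_univ, setIntegral_univ] at h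
  intro s hs
  refine MeasurableSpace.induction_on_inter
    (m := MeasurableSpace.comap
      (fun ω => fun (i : Fin M) (j : Fin (N i)) => ξ (i : ℕ) (j : ℕ) ω) inferInstance)
    (C := fun s _ => ∫ ω in s, indE ω ∂P = ∫ ω in s, f ω ∂P)
    hgen
    (isPiSystem_piiUnionInter _
      (fun p => @MeasurableSpace.isPiSystem_measurableSet Ω
        (MeasurableSpace.comap (ξ p.1 p.2) inferInstance)) Sset)
    (by simp)
    ?basic
    ?compl
    ?union
    s hs
  case compl =>
    intro t ht hC
    have htm : MeasurableSet t := hDle t ht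
    have h1 := integral_add_compl htm hindEint
    have h2 := integral_add_compl htm hfint
    linarith [huniv]
  case union =>
    intro g hdisj hmeas hC
    rw [integral_iUnion (fun n => hDle _ (hmeas n)) hdisj hindEint.integrableOn,
      integral_iUnion (fun n => hDle _ (hmeas n)) hdisj hfint.integrableOn]
    exact tsum_congr hC
  case basic =>
    exact hbasic


lemma stmt18_aux {Ω S : Type*} (G : MeasurableSpace Ω) [MeasurableSpace Ω]
    [MetricSpace S] [CompleteSpace S] [SeparableSpace S] [MeasurableSpace S] [BorelSpace S]
    (P : Measure Ω) [IsProbabilityMeasure P]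
    (ξ : ℕ → ℕ → Ω → S) (hξ : ∀ i j, Measurable (ξ i j))
    (μ : ℕ → Ω → Measure S) (hμm : ∀ i, Measurable (μ i))
    (hμp : ∀ i ω, IsProbabilityMeasure (μ i ω))
    (hcond : ∀ (m n : ℕ) (A : Fin m → Fin n → Set S), (∀ i j, MeasurableSet (A i j)) →
      P[Set.indicator {ω | ∀ (i : Fin m) (j : Fin n), ξ (i : ℕ) (j : ℕ) ω ∈ A i j}
          (fun _ => (1:ℝ)) |
          MeasurableSpace.comap (fun ω (i : Fin m) => μ (i : ℕ) ω) inferInstance]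
        =ᵐ[P] fun ω => ∏ i : Fin m, ∏ j : Fin n, ((μ (i : ℕ) ω) (A i j)).toReal)
    (M : ℕ) (N O : Fin M → ℕ) (hNO : ∀ i, N i < O i)
    (A : Fin M → ℕ → Set S) (hA : ∀ (i : Fin M), ∀ j ∈ Finset.Ico (N i) (O i), MeasurableSet (A i j))
    (hG : G ≤ MeasurableSpace.comap
      (fun ω => fun (i : Fin M) (j : Fin (N i)) => ξ (i : ℕ) (j : ℕ) ω) inferInstance) :
    P[Set.indicator {ω | ∀ i : Fin M, ∀ j ∈ Finset.Ico (N i) (O i), ξ (i : ℕ) j ω ∈ A i j}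
        (fun _ => (1:ℝ)) | G]
      =ᵐ[P]
    P[fun ω => ∏ i : Fin M, ∏ j ∈ Finset.Ico (N i) (O i), ((μ (i : ℕ) ω) (A i j)).toReal | G] := by
  classical
  set E : Set Ω := {ω | ∀ i : Fin M, ∀ j ∈ Finset.Ico (N i) (O i), ξ (i : ℕ) j ω ∈ A i j} with hE
  set indE : Ω → ℝ := Set.indicator E (fun _ => (1:ℝ)) with hindE
  set f : Ω → ℝ := fun ω => ∏ i : Fin M, ∏ j ∈ Finset.Ico (N i) (O i),
    ((μ (i : ℕ) ω) (A i j)).toReal with hf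
  have hDle : MeasurableSpace.comap
      (fun ω => fun (i : Fin M) (j : Fin (N i)) => ξ (i : ℕ) (j : ℕ) ω) inferInstance
      ≤ (inferInstance : MeasurableSpace Ω) := by
    refine Measurable.comap_le ?_
    exact measurable_pi_lambda _ fun i => measurable_pi_lambda _ fun j => hξ _ _
  have hGle : G ≤ (inferInstance : MeasurableSpace Ω) := hG.trans hDle
  haveI : SigmaFinite (P.trim hGle) := inferInstance
  -- measurability of E
  have hEmeas : MeasurableSet E := by
    have h : E = ⋂ i : Fin M, ⋂ j ∈ Finset.Ico (N i) (O i), ξ (i : ℕ) j ⁻¹' A i j := by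
      ext ω; simp [hE, Set.mem_iInter]
    rw [h]
    exact MeasurableSet.iInter fun i => MeasurableSet.iInter fun j =>
      MeasurableSet.iInter fun hj => (hξ _ _) (hA i j hj)
  have hindEint : Integrable indE P := (integrable_const (1:ℝ)).indicator hEmeas
  have hf01 : ∀ ω, 0 ≤ f ω ∧ f ω ≤ 1 := by
    intro ω
    constructor
    · exact Finset.prod_nonneg fun i _ => Finset.prod_nonneg fun j _ => ENNReal.toReal_nonneg
    · refine Finset.prod_le_one (fun i _ => Finset.prod_nonneg fun j _ => ENNReal.toReal_nonneg)
        (fun i _ => Finset.prod_le_one (fun j _ => ENNReal.toReal_nonneg) fun j _ => ?_)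
      have h1 : μ (i : ℕ) ω (A i j) ≤ 1 := prob_le_one
      simpa using ENNReal.toReal_mono ENNReal.one_ne_top h1
  have hfmeas : Measurable f := by
    refine Finset.measurable_prod _ fun i _ => Finset.measurable_prod _ fun j hj => ?_
    exact ((Measure.measurable_coe (hA i j hj)).comp (hμm i)).ennreal_toReal
  have hfint : Integrable f P := by
    refine (integrable_const (1:ℝ)).mono' hfmeas.aestronglyMeasurable ?_
    exact Filter.Eventually.of_forall fun ω => by
      rw [Real.norm_eq_abs, abs_of_nonneg (hf01 ω).1]; exact (hf01 ω).2
  -- the key step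
  have key : ∀ s : Set Ω, MeasurableSet[MeasurableSpace.comap
      (fun ω => fun (i : Fin M) (j : Fin (N i)) => ξ (i : ℕ) (j : ℕ) ω) inferInstance] s →
      ∫ ω in s, indE ω ∂P = ∫ ω in s, f ω ∂P :=
    stmt18_key P ξ hξ μ hμm hμp hcond M N O hNO A hA
  -- conclude by uniqueness of conditional expectation
  refine (ae_eq_condExp_of_forall_setIntegral_eq hGle hindEint
    (fun s _ _ => integrable_condExp.integrableOn) (fun s hs _ => ?_)
    (stronglyMeasurable_condExp.aestronglyMeasurable)).symm
  rw [setIntegral_condExp hGle hfint hs, ← key s (hG s hs)]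

/-- Posterior prediction depends on the data only through the row distributions: for any
sub-σ-algebra `𝒢` of the σ-algebra generated by the observed entries,
`P(⋂_i ⋂_{N_i < j ≤ O_i} {ξ_{ij} ∈ A_{ij}} | 𝒢) = E[∏_i ∏_{N_i < j ≤ O_i} μ_i(A_{ij}) | 𝒢]`. -/
theorem stmt18 {Ω S : Type*} [MeasurableSpace Ω]
    [MetricSpace S] [CompleteSpace S] [SeparableSpace S] [MeasurableSpace S] [BorelSpace S]
    (P : Measure Ω) [IsProbabilityMeasure P]
    (ξ : ℕ → ℕ → Ω → S) (hξ : ∀ i j, Measurable (ξ i j))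
    (hre : RowExchangeable P ξ)
    (μ : ℕ → Ω → Measure S) (hμm : ∀ i, Measurable (μ i))
    (hμp : ∀ i ω, IsProbabilityMeasure (μ i ω))
    -- conditionally on `μ₁,…,μ_m`, the entries of each `m × n` block are independent with
    -- `ξ_{ij} ∼ μ_i`  (i.e. `L(X_{mn} | μ₁,…,μ_m) = ∏ μ_i^n`)
    (hcond : ∀ (m n : ℕ) (A : Fin m → Fin n → Set S), (∀ i j, MeasurableSet (A i j)) →
      P[Set.indicator {ω | ∀ (i : Fin m) (j : Fin n), ξ (i : ℕ) (j : ℕ) ω ∈ A i j}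
          (fun _ => (1:ℝ)) |
          MeasurableSpace.comap (fun ω (i : Fin m) => μ (i : ℕ) ω) inferInstance]
        =ᵐ[P] fun ω => ∏ i : Fin m, ∏ j : Fin n, ((μ (i : ℕ) ω) (A i j)).toReal)
    (M : ℕ) (N O : Fin M → ℕ) (hNO : ∀ i, N i < O i)
    (A : Fin M → ℕ → Set S) (hA : ∀ (i : Fin M), ∀ j ∈ Finset.Ico (N i) (O i), MeasurableSet (A i j))
    (G : MeasurableSpace Ω)
    (hG : G ≤ MeasurableSpace.comap
      (fun ω => fun (i : Fin M) (j : Fin (N i)) => ξ (i : ℕ) (j : ℕ) ω) inferInstance) :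
    P[Set.indicator {ω | ∀ i : Fin M, ∀ j ∈ Finset.Ico (N i) (O i), ξ (i : ℕ) j ω ∈ A i j}
        (fun _ => (1:ℝ)) | G]
      =ᵐ[P]
    P[fun ω => ∏ i : Fin M, ∏ j ∈ Finset.Ico (N i) (O i), ((μ (i : ℕ) ω) (A i j)).toReal | G] := by
  rename_i mΩ mMet mCom mSep mS mBor mProb
  exact @stmt18_aux Ω S G mΩ mMet mCom mSep mS mBor P mProb ξ hξ μ hμm hμp hcond M N O hNO A hA hG
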